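/- arXiv:1203.6610 — 7 statements merged into one kernel-verified Lean document; each statement's English description precedes it below -/
import Mathlib

section
/- In the monopoly setting, for every partition π of G and every buyer b' ∈ B, Σ_{Ḡ∈π} V̄1(B,Ḡ) − Σ_{Ḡ∈π} V̄1(B∖{b'},Ḡ) = Σ_{Ḡ∈π} max(v_{b'}(Ḡ) − V̄2(B,Ḡ), 0); that is, the decrease in (unnormalized) social welfare caused by removing buyer b' equals b''s utility in b''s presence. -/
open Finset

variable {B G S : Type*} [Fintype B] [Fintype G] [Fintype S]
variable [DecidableEq B] [DecidableEq G] [DecidableEq S]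

/-- `v_b(Ḡ)`: buyer `b`'s total valuation of the variants in `Ḡ`. -/
def vsum (v : B → G → ℕ) (b : B) (Gb : Finset G) : ℕ := ∑ g ∈ Gb, v b g

/-- `V̄1(B̄,Ḡ)`: the largest value among `(v_b(Ḡ))_{b∈B̄}` (`0` if `B̄ = ∅`). -/
def V1 (v : B → G → ℕ) (Bb : Finset B) (Gb : Finset G) : ℕ :=
  Bb.sup (fun b => vsum v b Gb)

/-- `V̄2(B̄,Ḡ)`: the second-largest value, counted with multiplicity
(`0` if `|B̄| ≤ 1`).  It equals the minimum, over removal of one buyer,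
of the maximum over the remaining buyers. -/
def V2 (v : B → G → ℕ) (Bb : Finset B) (Gb : Finset G) : ℕ :=
  if h : Bb.Nonempty then Bb.inf' h (fun b => V1 v (Bb.erase b) Gb) else 0

/-- The set of buyers choosing seller `s` under the assignment `σ`. -/
def buyersOf (σ : B → S) (s : S) : Finset B := univ.filter (fun b => σ b = s)

/-- Buyer `b`'s utility in the multi-seller game. -/
def ubuyer (v : B → G → ℕ) (τ : S → Finpartition (univ : Finset G)) (σ : B → S) (b : B) : ℚ :=
  (Fintype.card G : ℚ)⁻¹ *
    ∑ Gb ∈ (τ (σ b)).parts, max ((vsum v b Gb : ℚ) - (V2 v (buyersOf σ (σ b)) Gb : ℚ)) 0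

/-- Seller `s`'s utility in the multi-seller game. -/
def useller (v : B → G → ℕ) (τ : S → Finpartition (univ : Finset G)) (σ : B → S) (s : S) : ℚ :=
  (Fintype.card G : ℚ)⁻¹ * ∑ Gb ∈ (τ s).parts, (V2 v (buyersOf σ s) Gb : ℚ)

/-- Social welfare in the multi-seller game. -/
def SWm (v : B → G → ℕ) (τ : S → Finpartition (univ : Finset G)) (σ : B → S) : ℚ :=
  ((Fintype.card S : ℚ) * (Fintype.card G : ℚ))⁻¹ *
    ∑ s : S, ∑ Gb ∈ (τ s).parts, (V1 v (buyersOf σ s) Gb : ℚ)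

/-- Social welfare in the single-seller (monopoly) game. -/
def SW1 (v : B → G → ℕ) (π : Finpartition (univ : Finset G)) : ℚ :=
  (Fintype.card G : ℚ)⁻¹ * ∑ Gb ∈ π.parts, (V1 v (univ : Finset B) Gb : ℚ)

/-- The monopolist's revenue. -/
def rev1 (v : B → G → ℕ) (π : Finpartition (univ : Finset G)) : ℚ :=
  (Fintype.card G : ℚ)⁻¹ * ∑ Gb ∈ π.parts, (V2 v (univ : Finset B) Gb : ℚ)

/-- Buyer `b`'s utility in the monopoly game. -/
def ub1 (v : B → G → ℕ) (π : Finpartition (univ : Finset G)) (b : B) : ℚ :=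
  (Fintype.card G : ℚ)⁻¹ *
    ∑ Gb ∈ π.parts, max ((vsum v b Gb : ℚ) - (V2 v (univ : Finset B) Gb : ℚ)) 0

/-- `π` refines `π̂`: every block of `π̂` is a union of blocks of `π`. -/
def IsRefinement (π πhat : Finpartition (univ : Finset G)) : Prop :=
  ∀ t ∈ πhat.parts, ∃ P ⊆ π.parts, t = P.sup id

/-- `σ` is a (pure) Nash equilibrium of the buyers' subgame induced by `τ`. -/
def IsNash (v : B → G → ℕ) (τ : S → Finpartition (univ : Finset G)) (σ : B → S) : Prop :=
  ∀ (b : B) (s : S), ubuyer v τ (Function.update σ b s) b ≤ ubuyer v τ σ b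

/-- `p^i(G)`: the number of goods demanded by at least `i` buyers. -/
def pdem (v : B → G → ℕ) (i : ℕ) : ℕ :=
  (univ.filter (fun g : G => i ≤ ∑ b : B, v b g)).card

/-- The trivial (indiscrete) partition `{G}`, which discloses nothing. -/
def trivPart (G : Type*) [Fintype G] [DecidableEq G] [Nonempty G] :
    Finpartition (univ : Finset G) :=
  Finpartition.indiscrete Finset.univ_nonempty.ne_empty

/-- `(π, f)` is a pure subgame perfect equilibrium of the two-stage game. -/
def IsSPE (v : B → G → ℕ) (π : S → Finpartition (univ : Finset G))
    (f : (S → Finpartition (univ : Finset G)) → (B → S)) : Prop :=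
  (∀ τ, IsNash v τ (f τ)) ∧
  ∀ (s : S) (ρ : Finpartition (univ : Finset G)),
    useller v (Function.update π s ρ) (f (Function.update π s ρ)) s ≤ useller v π (f π) s


lemma key_term {B G : Type*} [Fintype B] [Fintype G] [DecidableEq B] [DecidableEq G]
    [Nonempty B] (v : B → G → ℕ) (b' : B) (Gb : Finset G) :
    (V1 v (univ : Finset B) Gb : ℤ) - (V1 v ((univ : Finset B).erase b') Gb : ℤ) =
      max ((vsum v b' Gb : ℤ) - (V2 v (univ : Finset B) Gb : ℤ)) 0 := by
  have hne : (univ : Finset B).Nonempty := univ_nonempty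
  have hV2 : V2 v (univ : Finset B) Gb
      = univ.inf' hne (fun b => V1 v (univ.erase b) Gb) := by
    rw [V2, dif_pos hne]
  have hV1 : V1 v (univ : Finset B) Gb
      = max (vsum v b' Gb) (V1 v (univ.erase b') Gb) := by
    have := Finset.sup_insert (b := b') (s := univ.erase b')
      (f := fun b => vsum v b Gb)
    rw [Finset.insert_erase (mem_univ b')] at this
    rw [V1, this, V1]
  by_cases h : vsum v b' Gb ≤ V1 v (univ.erase b') Gb
  · have h1 : V1 v (univ : Finset B) Gb = V1 v (univ.erase b') Gb := by
      rw [hV1, max_eq_right h]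
    have h2 : vsum v b' Gb ≤ V2 v (univ : Finset B) Gb := by
      rw [hV2]
      apply Finset.le_inf'
      intro b _
      by_cases hb : b = b'
      · subst hb; exact h
      · exact Finset.le_sup (f := fun b => vsum v b Gb)
          (Finset.mem_erase.2 ⟨fun hc => hb hc.symm, mem_univ b'⟩)
    rw [h1, max_eq_right]
    · ring
    · have : (vsum v b' Gb : ℤ) ≤ (V2 v (univ : Finset B) Gb : ℤ) := by exact_mod_cast h2
      linarith
  · push_neg at h
    have h1 : V1 v (univ : Finset B) Gb = vsum v b' Gb := by
      rw [hV1, max_eq_left h.le]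
    have h2 : V2 v (univ : Finset B) Gb = V1 v (univ.erase b') Gb := by
      rw [hV2]
      apply le_antisymm
      · exact Finset.inf'_le _ (mem_univ b')
      · apply Finset.le_inf'
        intro b _
        by_cases hb : b = b'
        · subst hb; exact le_rfl
        · exact le_trans h.le (Finset.le_sup (f := fun b => vsum v b Gb)
            (Finset.mem_erase.2 ⟨fun hc => hb hc.symm, mem_univ b'⟩))
    have h3 : (V1 v (univ.erase b') Gb : ℤ) ≤ (vsum v b' Gb : ℤ) := by
      exact_mod_cast h.le
    rw [h1, h2, max_eq_left (by linarith)]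

/-- removing a buyer decreases the (unnormalized) welfare by
exactly that buyer's utility. -/
theorem welfare_drop_eq_buyer_utility [Nonempty B] [Nonempty G]
    (v : B → G → ℕ) (hv : ∀ b g, v b g ≤ 1)
    (π : Finpartition (univ : Finset G)) (b' : B) :
    (∑ Gb ∈ π.parts, (V1 v (univ : Finset B) Gb : ℤ)) -
      (∑ Gb ∈ π.parts, (V1 v ((univ : Finset B).erase b') Gb : ℤ)) =
      ∑ Gb ∈ π.parts, max ((vsum v b' Gb : ℤ) - (V2 v (univ : Finset B) Gb : ℤ)) 0 := by
  rw [← Finset.sum_sub_distrib]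
  exact Finset.sum_congr rfl fun Gb _ => key_term v b' Gb
end

section
/- For every seller profile τ there exists a buyer assignment σ : B → S that is a Nash equilibrium for τ; that is, the buyers' subgame always has a pure Nash equilibrium. -/
open Finset

variable {B G S : Type*} [Fintype B] [Fintype G] [Fintype S]
variable [DecidableEq B] [DecidableEq G] [DecidableEq S]

lemma key_aux (v : B → G → ℕ) (Bb : Finset B) (Gb : Finset G) (b : B) (hb : b ∈ Bb) :
    max ((vsum v b Gb : ℚ) - (V2 v Bb Gb : ℚ)) 0
      = (V1 v Bb Gb : ℚ) - (V1 v (Bb.erase b) Gb : ℚ) := by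
  have hne : Bb.Nonempty := ⟨b, hb⟩
  have hV1 : V1 v Bb Gb = vsum v b Gb ⊔ V1 v (Bb.erase b) Gb := by
    conv_lhs => rw [V1, ← Finset.insert_erase hb, Finset.sup_insert]
    rw [V1]
  rcases le_or_gt (vsum v b Gb) (V1 v (Bb.erase b) Gb) with h | h
  · have h1 : V1 v Bb Gb = V1 v (Bb.erase b) Gb := by rw [hV1, sup_eq_right.mpr h]
    have h2 : vsum v b Gb ≤ V2 v Bb Gb := by
      rw [V2, dif_pos hne]
      apply Finset.le_inf'
      intro b' hb'
      by_cases hbb : b' = b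
      · subst hbb; exact h
      · show vsum v b Gb ≤ (Bb.erase b').sup fun b => vsum v b Gb
        exact Finset.le_sup (f := fun b => vsum v b Gb)
          (Finset.mem_erase.mpr ⟨fun hc => hbb hc.symm, hb⟩)
    rw [h1, sub_self, max_eq_right]
    have : (vsum v b Gb : ℚ) ≤ (V2 v Bb Gb : ℚ) := by exact_mod_cast h2
    linarith
  · have h1 : V1 v Bb Gb = vsum v b Gb := by rw [hV1, sup_eq_left.mpr h.le]
    have h2 : V2 v Bb Gb = V1 v (Bb.erase b) Gb := by
      rw [V2, dif_pos hne]
      apply le_antisymm (Finset.inf'_le _ hb)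
      apply Finset.le_inf'
      intro b' hb'
      by_cases hbb : b' = b
      · subst hbb; exact le_rfl
      · refine h.le.trans ?_
        show vsum v b Gb ≤ (Bb.erase b').sup fun b => vsum v b Gb
        exact Finset.le_sup (f := fun b => vsum v b Gb)
          (Finset.mem_erase.mpr ⟨fun hc => hbb hc.symm, hb⟩)
    rw [h1, h2, max_eq_left]
    have : (V1 v (Bb.erase b) Gb : ℚ) ≤ (vsum v b Gb : ℚ) := by exact_mod_cast h.le
    linarith

lemma ubuyer_split (v : B → G → ℕ) (τ : S → Finpartition (univ : Finset G))
    (ρ : B → S) (b : B) :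
    ubuyer v τ ρ b = (Fintype.card G : ℚ)⁻¹ *
      ((∑ s' : S, ∑ Gb ∈ (τ s').parts, (V1 v (buyersOf ρ s') Gb : ℚ))
        - ∑ s' : S, ∑ Gb ∈ (τ s').parts, (V1 v ((buyersOf ρ s').erase b) Gb : ℚ)) := by
  have hb : b ∈ buyersOf ρ (ρ b) := by simp [buyersOf]
  rw [ubuyer]
  congr 1
  rw [← Finset.sum_sub_distrib]
  have hterm : ∀ Gb ∈ (τ (ρ b)).parts,
      max ((vsum v b Gb : ℚ) - (V2 v (buyersOf ρ (ρ b)) Gb : ℚ)) 0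
        = (V1 v (buyersOf ρ (ρ b)) Gb : ℚ) - (V1 v ((buyersOf ρ (ρ b)).erase b) Gb : ℚ) :=
    fun Gb _ => key_aux v _ Gb b hb
  rw [Finset.sum_congr rfl hterm, Finset.sum_sub_distrib]
  symm
  rw [Finset.sum_eq_single (ρ b)]
  · intro s' _ hs'
    have hnb : b ∉ buyersOf ρ s' := by
      intro hmem
      simp only [buyersOf, Finset.mem_filter] at hmem
      exact hs' hmem.2.symm
    rw [Finset.erase_eq_of_notMem hnb, sub_self]
  · intro h; exact absurd (Finset.mem_univ _) h

/-- the buyers' subgame always has a pure Nash equilibrium. -/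
theorem exists_pure_nash [Nonempty B] [Nonempty G] [Nonempty S]
    (v : B → G → ℕ) (hv : ∀ b g, v b g ≤ 1)
    (τ : S → Finpartition (univ : Finset G)) :
    ∃ σ : B → S, IsNash v τ σ := by
  obtain ⟨σ, hσ⟩ := Finite.exists_max (fun σ : B → S =>
    ∑ s' : S, ∑ Gb ∈ (τ s').parts, (V1 v (buyersOf σ s') Gb : ℚ))
  refine ⟨σ, fun b s => ?_⟩
  set σ' := Function.update σ b s with hσ'def
  have hD : ∀ s' : S, (buyersOf σ' s').erase b = (buyersOf σ s').erase b := by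
    intro s'
    ext b'
    by_cases hbb : b' = b
    · simp [hbb]
    · simp [buyersOf, hσ'def, Function.update, hbb]
  rw [ubuyer_split v τ σ b, ubuyer_split v τ σ' b]
  have hDeq : (∑ s' : S, ∑ Gb ∈ (τ s').parts, (V1 v ((buyersOf σ' s').erase b) Gb : ℚ))
      = ∑ s' : S, ∑ Gb ∈ (τ s').parts, (V1 v ((buyersOf σ s').erase b) Gb : ℚ) := by
    simp_rw [hD]
  rw [hDeq]
  have hΦ := hσ σ'
  have hc : (0:ℚ) ≤ (Fintype.card G : ℚ)⁻¹ := by positivity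
  apply mul_le_mul_of_nonneg_left _ hc
  linarith
end

section
/- In the monopoly setting with exactly two buyers B = {a,b}, if a partition π of G refines a partition π̂ of G, then u_a(π) ≥ u_a(π̂), u_b(π) ≥ u_b(π̂), and u_s(π) ≤ u_s(π̂); that is, refining the partition weakly increases each buyer's utility and weakly decreases the seller's revenue. -/
open Finset

variable {B G S : Type*} [Fintype B] [Fintype G] [Fintype S]
variable [DecidableEq B] [DecidableEq G] [DecidableEq S]

section Aux

variable {G : Type*} [Fintype G] [DecidableEq G]

/-- Each block of `π` is contained in some block of `π̂`. -/
lemma refinement_subset {π πhat : Finpartition (univ : Finset G)}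
    (h : IsRefinement π πhat) {s : Finset G} (hs : s ∈ π.parts) :
    ∃ t ∈ πhat.parts, s ⊆ t := by
  obtain ⟨g, hg⟩ := Finset.nonempty_iff_ne_empty.2 (π.ne_bot hs)
  obtain ⟨t, ht, hgt⟩ := πhat.exists_mem (Finset.mem_univ g)
  obtain ⟨P, hP, hPt⟩ := h t ht
  rw [hPt, Finset.mem_sup] at hgt
  obtain ⟨s', hs', hgs'⟩ := hgt
  have hss' : s = s' := π.eq_of_mem_parts hs (hP hs') hg hgs'
  refine ⟨t, ht, ?_⟩
  rw [hss', hPt]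
  exact Finset.le_sup (f := id) hs'

/-- A block of `π̂` is the sup of the `π`-blocks it contains. -/
lemma refinement_sup_fiber {π πhat : Finpartition (univ : Finset G)}
    (h : IsRefinement π πhat) {t : Finset G} (ht : t ∈ πhat.parts) :
    t = (π.parts.filter (· ⊆ t)).sup id := by
  obtain ⟨P, hP, hPt⟩ := h t ht
  apply le_antisymm
  · conv_lhs => rw [hPt]
    apply Finset.sup_mono
    intro s hs
    rw [Finset.mem_filter]
    exact ⟨hP hs, by rw [hPt]; exact Finset.le_sup (f := id) hs⟩
  · apply Finset.sup_le
    intro s hs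
    exact (Finset.mem_filter.1 hs).2

lemma parts_eq_biUnion_fibers {π πhat : Finpartition (univ : Finset G)}
    (h : IsRefinement π πhat) :
    π.parts = πhat.parts.biUnion (fun t => π.parts.filter (· ⊆ t)) := by
  ext s
  simp only [Finset.mem_biUnion, Finset.mem_filter]
  constructor
  · intro hs
    obtain ⟨t, ht, hst⟩ := refinement_subset h hs
    exact ⟨t, ht, hs, hst⟩
  · rintro ⟨t, _, hs, _⟩
    exact hs

lemma fibers_pairwiseDisjoint {π πhat : Finpartition (univ : Finset G)} :
    Set.PairwiseDisjoint (↑πhat.parts) (fun t => π.parts.filter (· ⊆ t)) := by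
  intro t ht t' ht' htt'
  simp only [Function.onFun, Finset.disjoint_left, Finset.mem_filter]
  rintro s ⟨hs, hst⟩ ⟨-, hst'⟩
  obtain ⟨g, hg⟩ := Finset.nonempty_iff_ne_empty.2 (π.ne_bot hs)
  exact htt' (πhat.eq_of_mem_parts ht ht' (hst hg) (hst' hg))

lemma sum_parts_fiberwise {π πhat : Finpartition (univ : Finset G)}
    (h : IsRefinement π πhat) {M : Type*} [AddCommMonoid M] (f : Finset G → M) :
    ∑ s ∈ π.parts, f s = ∑ t ∈ πhat.parts, ∑ s ∈ π.parts.filter (· ⊆ t), f s := by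
  conv_lhs => rw [parts_eq_biUnion_fibers h]
  exact Finset.sum_biUnion fibers_pairwiseDisjoint

/-- Additivity of `vsum` across a fiber. -/
lemma vsum_fiber {B : Type*} (v : B → G → ℕ) (b : B) {π πhat : Finpartition (univ : Finset G)}
    (h : IsRefinement π πhat) {t : Finset G} (ht : t ∈ πhat.parts) :
    vsum v b t = ∑ s ∈ π.parts.filter (· ⊆ t), vsum v b s := by
  have hdisj : Set.PairwiseDisjoint (↑(π.parts.filter (· ⊆ t))) (id : Finset G → Finset G) := by
    apply π.disjoint.subset
    intro s hs
    exact Finset.mem_coe.2 (Finset.mem_of_mem_filter s (Finset.mem_coe.1 hs))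
  have hbi : t = (π.parts.filter (· ⊆ t)).biUnion id := by
    rw [← Finset.sup_eq_biUnion]
    exact refinement_sup_fiber h ht
  conv_lhs => rw [vsum, hbi]
  rw [Finset.sum_biUnion hdisj]
  rfl

end Aux

/-- with two buyers, refining weakly increases each buyer's
utility and weakly decreases the seller's revenue. -/
theorem two_buyers_refinement [Nonempty G]
    (v : B → G → ℕ) (hv : ∀ b g, v b g ≤ 1)
    (hB : Fintype.card B = 2)
    (π πhat : Finpartition (univ : Finset G)) (h : IsRefinement π πhat) :
    (∀ b : B, ub1 v πhat b ≤ ub1 v π b) ∧ rev1 v π ≤ rev1 v πhat := by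
  obtain ⟨x, y, hxy, hxyuniv⟩ := Finset.card_eq_two.1 (show (univ : Finset B).card = 2 by rw [Finset.card_univ]; exact hB)
  -- V2 over the two-buyer universe is the min of the two valuations
  have hV2 : ∀ Gb : Finset G, V2 v (univ : Finset B) Gb
      = min (vsum v x Gb) (vsum v y Gb) := by
    intro Gb
    have hne : (univ : Finset B).Nonempty := ⟨x, Finset.mem_univ x⟩
    have hex : ({x, y} : Finset B).erase x = {y} :=
      Finset.erase_insert (by simpa using hxy)
    have hey : ({x, y} : Finset B).erase y = {x} := by
      rw [Finset.pair_comm, Finset.erase_insert (by simpa using hxy.symm)]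
    rw [V2, dif_pos hne]
    have : (univ : Finset B).inf' hne (fun b => V1 v ((univ : Finset B).erase b) Gb)
        = ({x, y} : Finset B).inf' (by simp) (fun b => V1 v (({x, y} : Finset B).erase b) Gb) := by
      congr 1 <;> simp [hxyuniv]
    rw [this]
    have fx : V1 v (({x, y} : Finset B).erase x) Gb = vsum v y Gb := by
      rw [hex, V1, Finset.sup_singleton]
    have fy : V1 v (({x, y} : Finset B).erase y) Gb = vsum v x Gb := by
      rw [hey, V1, Finset.sup_singleton]
    apply le_antisymm
    · apply le_min
      · exact le_trans (Finset.inf'_le _ (by simp : y ∈ ({x, y} : Finset B))) (le_of_eq fy)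
      · exact le_trans (Finset.inf'_le _ (by simp : x ∈ ({x, y} : Finset B))) (le_of_eq fx)
    · apply Finset.le_inf'
      intro b hb
      rcases Finset.mem_insert.1 hb with rfl | hb
      · rw [fx]; exact min_le_right _ _
      · rw [Finset.mem_singleton.1 hb, fy]; exact min_le_left _ _
  -- the key combinatorial inequality
  set m : Finset G → ℕ := fun s => min (vsum v x s) (vsum v y s) with hm
  have hfiber_min : ∀ t ∈ πhat.parts,
      ∑ s ∈ π.parts.filter (· ⊆ t), m s ≤ m t := by
    intro t ht
    apply le_min
    · calc ∑ s ∈ π.parts.filter (· ⊆ t), m s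
          ≤ ∑ s ∈ π.parts.filter (· ⊆ t), vsum v x s :=
            Finset.sum_le_sum (fun s _ => min_le_left _ _)
        _ = vsum v x t := (vsum_fiber v x h ht).symm
    · calc ∑ s ∈ π.parts.filter (· ⊆ t), m s
          ≤ ∑ s ∈ π.parts.filter (· ⊆ t), vsum v y s :=
            Finset.sum_le_sum (fun s _ => min_le_right _ _)
        _ = vsum v y t := (vsum_fiber v y h ht).symm
  have hkey : ∑ s ∈ π.parts, m s ≤ ∑ t ∈ πhat.parts, m t := by
    rw [sum_parts_fiberwise h m]
    exact Finset.sum_le_sum hfiber_min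
  have hGpos : (0 : ℚ) ≤ (Fintype.card G : ℚ)⁻¹ := by positivity
  constructor
  · -- buyers' utilities
    intro b
    have hb : b = x ∨ b = y := by
      have : b ∈ ({x, y} : Finset B) := hxyuniv ▸ Finset.mem_univ b
      simpa using this
    have hterm : ∀ (ρ : Finpartition (univ : Finset G)), ∀ Gb ∈ ρ.parts,
        max ((vsum v b Gb : ℚ) - (V2 v (univ : Finset B) Gb : ℚ)) 0
          = (vsum v b Gb : ℚ) - (m Gb : ℚ) := by
      intro ρ Gb _
      have hle : m Gb ≤ vsum v b Gb := by
        rcases hb with rfl | rfl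
        · exact min_le_left _ _
        · exact min_le_right _ _
      rw [hV2]
      exact max_eq_left (by simp only [sub_nonneg]; exact_mod_cast hle)
    rw [ub1, ub1, Finset.sum_congr rfl (hterm π), Finset.sum_congr rfl (hterm πhat)]
    apply mul_le_mul_of_nonneg_left _ hGpos
    rw [Finset.sum_sub_distrib, Finset.sum_sub_distrib]
    have hvb : ∑ s ∈ π.parts, (vsum v b s : ℚ) = ∑ t ∈ πhat.parts, (vsum v b t : ℚ) := by
      rw [sum_parts_fiberwise h (fun s => (vsum v b s : ℚ))]
      exact Finset.sum_congr rfl (fun t ht => by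
        rw [vsum_fiber v b h ht]; push_cast; ring)
    rw [hvb]
    apply sub_le_sub_left
    have := hkey
    push_cast
    exact_mod_cast this
  · -- seller's revenue
    rw [rev1, rev1]
    apply mul_le_mul_of_nonneg_left _ hGpos
    have h1 : ∀ (ρ : Finpartition (univ : Finset G)),
        ∑ Gb ∈ ρ.parts, (V2 v (univ : Finset B) Gb : ℚ) = ((∑ Gb ∈ ρ.parts, m Gb : ℕ) : ℚ) := by
      intro ρ
      push_cast
      exact Finset.sum_congr rfl (fun Gb _ => by rw [hV2])
    rw [h1, h1]
    exact_mod_cast hkey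
end

section
/- In the monopoly setting, every revenue-maximizing partition π satisfies SW(π) ≥ (1/3)·OPT, where OPT := max_{π'} SW(π') over all partitions π' of G. -/
open Finset

variable {B G S : Type*} [Fintype B] [Fintype G] [Fintype S]
variable [DecidableEq B] [DecidableEq G] [DecidableEq S]

/-! ### Auxiliary lemmas for the proof of Statement 6 -/

private def pairIdx (k h t j : ℕ) : ℕ :=
  if j < k then j + h else if h ≤ j ∧ j < t then j - h else j

private lemma pairIdx_lt {k h t : ℕ} (h1 : k + h = t) {j : ℕ} (hj : j < t) :
    pairIdx k h t j < t := by
  unfold pairIdx; split_ifs <;> omega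

private lemma pairIdx_invol {k h t : ℕ} (h1 : k + h = t) (h2 : k ≤ h) (j : ℕ) :
    pairIdx k h t (pairIdx k h t j) = j := by
  unfold pairIdx; split_ifs <;> omega

private lemma pairIdx_of_le {k h t j : ℕ} (h1 : k + h = t) (hj : t ≤ j) :
    pairIdx k h t j = j := by
  unfold pairIdx; split_ifs <;> omega

private lemma pairIdx_small {k h t j : ℕ} (hj : j < k) :
    pairIdx k h t j = j + h := by
  unfold pairIdx; rw [if_pos hj]

private lemma vsum_le_V1 {v : B → G → ℕ} {b : B} {Bb : Finset B} (h : b ∈ Bb) (Gb : Finset G) :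
    vsum v b Gb ≤ V1 v Bb Gb := Finset.le_sup (f := fun b => vsum v b Gb) h

private lemma V2_le_V1 (v : B → G → ℕ) (Bb : Finset B) (Gb : Finset G) :
    V2 v Bb Gb ≤ V1 v Bb Gb := by
  unfold V2
  split_ifs with h
  · obtain ⟨b, hb⟩ := h
    exact le_trans (Finset.inf'_le _ hb) (Finset.sup_mono (Finset.erase_subset _ _))
  · exact Nat.zero_le _

private lemma one_le_V2 {v : B → G → ℕ} {Gb : Finset G} {b1 b2 : B} (hne : b1 ≠ b2)
    (h1 : 1 ≤ vsum v b1 Gb) (h2 : 1 ≤ vsum v b2 Gb) :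
    1 ≤ V2 v (univ : Finset B) Gb := by
  have hne' : (univ : Finset B).Nonempty := ⟨b1, mem_univ b1⟩
  unfold V2
  rw [dif_pos hne']
  apply Finset.le_inf'
  intro b _
  by_cases hb : b = b1
  · subst hb
    exact le_trans h2 (vsum_le_V1 (Finset.mem_erase.mpr ⟨hne.symm, mem_univ _⟩) Gb)
  · exact le_trans h1 (vsum_le_V1 (Finset.mem_erase.mpr ⟨Ne.symm hb, mem_univ _⟩) Gb)

private lemma sum_parts_nat (P : Finpartition (univ : Finset G)) (f : G → ℕ) :
    ∑ Gb ∈ P.parts, ∑ g ∈ Gb, f g = ∑ g, f g := by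
  conv_rhs => rw [← P.biUnion_parts]
  rw [Finset.sum_biUnion (P.supIndep.pairwiseDisjoint)]
  rfl

set_option maxHeartbeats 2000000 in
private lemma key_lemma [Nonempty B] [Nonempty G] (v : B → G → ℕ) (hv : ∀ b g, v b g ≤ 1) :
    ∃ (P : Finpartition (univ : Finset G)) (b : B),
      pdem v 1 ≤ 2 * (∑ Gb ∈ P.parts, V2 v (univ : Finset B) Gb) + vsum v b univ := by
  classical
  set U : Finset G := univ.filter (fun g => ∑ b, v b g = 1) with hU
  set M : Finset G := univ.filter (fun g => 2 ≤ ∑ b, v b g) with hM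
  set t := U.card with ht
  have hUmem : ∀ g, g ∈ U ↔ ∑ b, v b g = 1 := by
    intro g; rw [hU, mem_filter]; simp
  have hMmem : ∀ g, g ∈ M ↔ 2 ≤ ∑ b, v b g := by
    intro g; rw [hM, mem_filter]; simp
  have hexists : ∀ g ∈ U, ∃ b, 1 ≤ v b g := by
    intro g hg
    rw [hUmem] at hg
    by_contra hcon
    push_neg at hcon
    have : ∑ b, v b g = 0 := Finset.sum_eq_zero (fun b _ => by have := hcon b; omega)
    omega
  set owner : G → B := fun g => if hg : ∃ b, 1 ≤ v b g then hg.choose else Classical.arbitrary B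
    with howner_def
  have howner : ∀ g ∈ U, 1 ≤ v (owner g) g := by
    intro g hg
    obtain ⟨b, hb⟩ := hexists g hg
    have he : ∃ b, 1 ≤ v b g := ⟨b, hb⟩
    rw [howner_def]
    simp only [dif_pos he]
    exact he.choose_spec
  clear_value owner
  -- fibers and the max fiber size
  set fib : B → Finset G := fun b => U.filter (fun g => owner g = b) with hfib
  set a := (univ : Finset B).sup (fun b => (fib b).card) with ha
  obtain ⟨bstar, _, hbstar⟩ :=
    Finset.exists_mem_eq_sup (univ : Finset B) univ_nonempty (fun b => (fib b).card)
  have hfib_le : ∀ b, (fib b).card ≤ a := by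
    intro b
    rw [ha]
    exact Finset.le_sup (f := fun b => (fib b).card) (mem_univ b)
  have hvsum_bstar : a ≤ vsum v bstar univ := by
    rw [ha, hbstar]
    unfold vsum
    calc (fib bstar).card = ∑ _g ∈ fib bstar, 1 := by simp
      _ ≤ ∑ g ∈ fib bstar, v bstar g := Finset.sum_le_sum (fun g hg => by
          rw [hfib] at hg
          simp only [mem_filter] at hg
          have h0 := howner g hg.1
          rw [hg.2] at h0
          exact h0)
      _ ≤ ∑ g ∈ univ, v bstar g := Finset.sum_le_sum_of_subset (subset_univ _)
  have hat : a ≤ t := by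
    rw [ha, hbstar, ht, hfib]
    exact Finset.card_le_card (Finset.filter_subset _ _)
  have ht1 : t = 0 ∨ 1 ≤ a := by
    rcases Nat.eq_zero_or_pos t with h0 | hpos
    · exact Or.inl h0
    · right
      obtain ⟨g, hg⟩ := Finset.card_pos.mp hpos
      have hgf : g ∈ fib (owner g) := by rw [hfib]; exact mem_filter.mpr ⟨hg, rfl⟩
      calc 1 ≤ (fib (owner g)).card := Finset.card_pos.mpr ⟨g, hgf⟩
        _ ≤ a := hfib_le _
  clear_value fib a
  -- the offset h and pair count k
  set h := max a ((t+1)/2) with hh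
  have hha : a ≤ h := le_max_left _ _
  have hcase : h ≤ a ∨ 2 * h ≤ t + 1 := by
    rcases max_choice a ((t+1)/2) with hc | hc <;> rw [hh, hc] <;> omega
  have hht : h ≤ t := by
    rcases max_choice a ((t+1)/2) with hc | hc <;> rw [hh, hc] <;> omega
  set k := t - h with hk
  have hkh : k + h = t := by omega
  have hkh2 : k ≤ h := by
    have h2 : (t+1)/2 ≤ h := le_max_right _ _
    omega
  clear_value h k
  -- sorting key
  set eB := Fintype.equivFin B with heB
  set eG := Fintype.equivFin G with heG
  set N := Fintype.card G with hN
  have hNpos : 0 < N := Fintype.card_pos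
  set key : G → ℕ := fun g => (eG g : ℕ) + (eB (owner g) : ℕ) * N with hkey
  have hkey_lt : ∀ g, (eG g : ℕ) < N := fun g => (eG g).isLt
  have hkey_mod : ∀ g, key g % N = (eG g : ℕ) := by
    intro g
    rw [hkey]
    simp only []
    rw [Nat.add_mul_mod_self_right, Nat.mod_eq_of_lt (hkey_lt g)]
  have hkey_div : ∀ g, key g / N = (eB (owner g) : ℕ) := by
    intro g
    rw [hkey]
    simp only []
    rw [Nat.add_mul_div_right _ _ hNpos, Nat.div_eq_of_lt (hkey_lt g), Nat.zero_add]
  have hkey_inj : Function.Injective key := by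
    intro g g' hgg
    have e1 := hkey_mod g
    have e2 := hkey_mod g'
    rw [hgg] at e1
    exact eG.injective (Fin.ext (e1.symm.trans e2))
  have howner_of_div : ∀ g g', key g / N = key g' / N → owner g = owner g' := by
    intro g g' hdd
    rw [hkey_div, hkey_div] at hdd
    exact eB.injective (Fin.ext hdd)
  clear_value key N
  -- the sorted list of uniquely demanded goods
  set r : G → G → Prop := fun g g' => key g ≤ key g' with hr
  haveI hdr : DecidableRel r := fun _ _ => Nat.decLe _ _
  haveI htr : IsTrans G r := ⟨fun _ _ _ h1 h2 => le_trans h1 h2⟩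
  haveI har : IsAntisymm G r := ⟨fun _ _ h1 h2 => hkey_inj (le_antisymm h1 h2)⟩
  haveI htot : IsTotal G r := ⟨fun _ _ => Nat.le_total _ _⟩
  set l := U.sort r with hl
  have hlen : l.length = t := Finset.length_sort r
  have hlnd : l.Nodup := Finset.sort_nodup U r
  have hlmem : ∀ g, g ∈ l ↔ g ∈ U := fun g => Finset.mem_sort r
  have hlsorted : l.Pairwise r := Finset.pairwise_sort U r
  clear_value l
  clear_value t U M
  set gd : G := Classical.arbitrary G with hgd
  have hgetU : ∀ i : ℕ, i < t → l.getD i gd ∈ U := by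
    intro i hi
    rw [List.getD_eq_getElem l _ (by omega), ← hlmem]
    exact List.getElem_mem _
  have hgetIdx : ∀ i : ℕ, i < t → l.idxOf (l.getD i gd) = i := by
    intro i hi
    rw [List.getD_eq_getElem l _ (by omega)]
    exact List.Nodup.idxOf_getElem hlnd i (by omega)
  have hgetInj : ∀ i j : ℕ, i < t → j < t → l.getD i gd = l.getD j gd → i = j := by
    intro i j hi hj hij
    have h1 := hgetIdx i hi
    rw [hij, hgetIdx j hj] at h1
    omega
  have hmono : ∀ i j : ℕ, i ≤ j → j < t → key (l.getD i gd) ≤ key (l.getD j gd) := by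
    intro i j hij hj
    have hi' : i < l.length := by omega
    have hj' : j < l.length := by omega
    rw [List.getD_eq_getElem l _ hi', List.getD_eq_getElem l _ hj']
    rcases Nat.lt_or_ge i j with hlt | hge
    · exact hlsorted.rel_get_of_lt (a := ⟨i, hi'⟩) (b := ⟨j, hj'⟩) hlt
    · have : i = j := le_antisymm hij hge
      subst this
      exact le_refl _
  -- goods at distance h in the list have different owners
  have hblock : ∀ i : ℕ, i < k →
      owner (l.getD i gd) ≠ owner (l.getD (i+h) gd) := by
    intro i hi heq
    have hmid : ∀ d : ℕ, d ≤ h → owner (l.getD (i+d) gd) = owner (l.getD i gd) := by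
      intro d hd
      have h1 : key (l.getD i gd) ≤ key (l.getD (i+d) gd) :=
        hmono i (i+d) (by omega) (by omega)
      have h2 : key (l.getD (i+d) gd) ≤ key (l.getD (i+h) gd) :=
        hmono (i+d) (i+h) (by omega) (by omega)
      have hd1 : key (l.getD i gd) / N ≤ key (l.getD (i+d) gd) / N :=
        Nat.div_le_div_right h1
      have hd2 : key (l.getD (i+d) gd) / N ≤ key (l.getD (i+h) gd) / N :=
        Nat.div_le_div_right h2
      have hd3 : key (l.getD i gd) / N = key (l.getD (i+h) gd) / N := by
        rw [hkey_div, hkey_div, heq]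
      apply howner_of_div
      omega
    have hsub : (Finset.range (h+1)).image (fun d => l.getD (i+d) gd)
        ⊆ fib (owner (l.getD i gd)) := by
      intro g hg
      simp only [Finset.mem_image, Finset.mem_range] at hg
      obtain ⟨d, hd, hgd2⟩ := hg
      rw [hfib]
      refine mem_filter.mpr ⟨?_, ?_⟩
      · rw [← hgd2]
        exact hgetU (i+d) (by omega)
      · rw [← hgd2]
        exact hmid d (by omega)
    have hcard : ((Finset.range (h+1)).image (fun d => l.getD (i+d) gd)).card = h + 1 := by
      rw [Finset.card_image_of_injOn, Finset.card_range]
      intro d1 hd1 d2 hd2 hdd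
      simp only [Finset.mem_coe, Finset.mem_range] at hd1 hd2
      have := hgetInj (i+d1) (i+d2) (by omega) (by omega) hdd
      omega
    have hbig : h + 1 ≤ (fib (owner (l.getD i gd))).card := by
      rw [← hcard]
      exact Finset.card_le_card hsub
    have := hfib_le (owner (l.getD i gd))
    omega
  -- the pairing involution
  set f : G → G := fun g => l.getD (pairIdx k h t (l.idxOf g)) g with hf
  have hf_not : ∀ g, g ∉ l → f g = g := by
    intro g hg
    have hidx : l.idxOf g = t := by rw [← hlen]; exact List.idxOf_eq_length_iff.mpr hg
    rw [hf]
    simp only []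
    rw [hidx, pairIdx_of_le hkh (le_refl t)]
    exact List.getD_eq_default _ _ (by omega)
  have hf_mem : ∀ j : ℕ, j < t → f (l.getD j gd) = l.getD (pairIdx k h t j) gd := by
    intro j hj
    have hp := pairIdx_lt hkh hj
    rw [hf]
    simp only []
    rw [hgetIdx j hj, List.getD_eq_getElem l _ (by omega), List.getD_eq_getElem l _ (by omega)]
  have hmeml : ∀ g, g ∈ l → g = l.getD (l.idxOf g) gd := by
    intro g hg
    have hj : l.idxOf g < l.length := List.idxOf_lt_length_iff.mpr hg
    rw [List.getD_eq_getElem l _ hj]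
    exact (List.getElem_idxOf hj).symm
  have hinvol : ∀ g, f (f g) = g := by
    intro g
    by_cases hg : g ∈ l
    · have hj : l.idxOf g < t := by
        rw [← hlen]; exact List.idxOf_lt_length_iff.mpr hg
      have hgeq := hmeml g hg
      rw [hgeq, hf_mem _ hj, hf_mem _ (pairIdx_lt hkh hj), pairIdx_invol hkh hkh2]
    · rw [hf_not g hg, hf_not g hg]
  clear_value f
  -- the partition induced by the pairing
  set st : Setoid G := ⟨fun g g' => g' = g ∨ g' = f g, by
    constructor
    · exact fun g => Or.inl rfl
    · intro g g' hgg'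
      rcases hgg' with h1 | h1
      · exact Or.inl h1.symm
      · right; rw [h1, hinvol]
    · intro g g' g'' h1 h2
      rcases h1 with h1 | h1 <;> rcases h2 with h2 | h2
      · exact Or.inl (h2.trans h1)
      · rw [h1] at h2; exact Or.inr h2
      · rw [h2, h1]; exact Or.inr rfl
      · rw [h2, h1, hinvol]; exact Or.inl rfl⟩ with hst
  haveI : DecidableRel st.r := fun g g' => inferInstanceAs (Decidable (g' = g ∨ g' = f g))
  set P := Finpartition.ofSetoid st with hP
  have hself : ∀ g : G, g ∈ P.part g := fun g =>
    Finpartition.mem_part_ofSetoid_iff_rel.mpr (Or.inl rfl)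
  have hfmem : ∀ g : G, f g ∈ P.part g := fun g =>
    Finpartition.mem_part_ofSetoid_iff_rel.mpr (Or.inr rfl)
  -- goods in M are demanded by two distinct buyers
  have two_dem : ∀ g ∈ M, ∃ b1 b2 : B, b1 ≠ b2 ∧ 1 ≤ v b1 g ∧ 1 ≤ v b2 g := by
    intro g hg
    rw [hMmem] at hg
    have he1 : ∃ b, 1 ≤ v b g := by
      by_contra hcon
      push_neg at hcon
      have : ∑ b, v b g = 0 := Finset.sum_eq_zero (fun b _ => by have := hcon b; omega)
      omega
    obtain ⟨b1, hb1⟩ := he1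
    have he2 : ∃ b ∈ univ.erase b1, 1 ≤ v b g := by
      by_contra hcon
      push_neg at hcon
      have hz : ∑ b ∈ univ.erase b1, v b g = 0 :=
        Finset.sum_eq_zero (fun b hb => by have := hcon b hb; omega)
      have hsum : ∑ b ∈ univ.erase b1, v b g + v b1 g = ∑ b, v b g :=
        Finset.sum_erase_add _ _ (mem_univ b1)
      have := hv b1 g
      omega
    obtain ⟨b2, hb2m, hb2⟩ := he2
    exact ⟨b2, b1, (Finset.mem_erase.mp hb2m).1, hb2, hb1⟩
  -- the witness set W
  set imL : Finset G := (Finset.range k).image (fun i => l.getD i gd) with himL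
  have himL_mem : ∀ g ∈ imL, ∃ i : ℕ, i < k ∧ g = l.getD i gd := by
    intro g hg
    rw [himL] at hg
    simp only [Finset.mem_image, Finset.mem_range] at hg
    obtain ⟨i, hi, hgi⟩ := hg
    exact ⟨i, hi, hgi.symm⟩
  have himL_card : imL.card = k := by
    rw [himL, Finset.card_image_of_injOn, Finset.card_range]
    intro d1 hd1 d2 hd2 hdd
    simp only [Finset.mem_coe, Finset.mem_range] at hd1 hd2
    exact hgetInj d1 d2 (by omega) (by omega) hdd
  have hMU : ∀ g, g ∈ M → g ∉ U := by
    intro g hgM hgU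
    rw [hMmem] at hgM
    rw [hUmem] at hgU
    omega
  have himLU : ∀ g ∈ imL, g ∈ U := by
    intro g hg
    obtain ⟨i, hi, rfl⟩ := himL_mem g hg
    exact hgetU i (by omega)
  set W : Finset G := M ∪ imL with hW
  have hWcard : W.card = M.card + k := by
    rw [hW, Finset.card_union_of_disjoint, himL_card]
    exact Finset.disjoint_left.mpr (fun g hgM hgi => hMU g hgM (himLU g hgi))
  -- each witness's part has second price at least 1
  have hV2part : ∀ w ∈ W, 1 ≤ V2 v (univ : Finset B) (P.part w) := by
    intro w hw
    rw [hW, Finset.mem_union] at hw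
    rcases hw with hw | hw
    · obtain ⟨b1, b2, hne, h1, h2⟩ := two_dem w hw
      refine one_le_V2 hne ?_ ?_
      · exact le_trans h1 (Finset.single_le_sum (f := fun g => v b1 g)
          (fun _ _ => Nat.zero_le _) (hself w))
      · exact le_trans h2 (Finset.single_le_sum (f := fun g => v b2 g)
          (fun _ _ => Nat.zero_le _) (hself w))
    · obtain ⟨i, hi, rfl⟩ := himL_mem w hw
      have hfw : f (l.getD i gd) = l.getD (i+h) gd := by
        rw [hf_mem i (by omega), pairIdx_small hi]
      have hne : owner (l.getD i gd) ≠ owner (l.getD (i+h) gd) := hblock i hi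
      have hU1 : l.getD i gd ∈ U := hgetU i (by omega)
      have hU2 : l.getD (i+h) gd ∈ U := hgetU (i+h) (by omega)
      refine one_le_V2 hne ?_ ?_
      · exact le_trans (howner _ hU1)
          (Finset.single_le_sum (f := fun g => v (owner (l.getD i gd)) g)
            (fun _ _ => Nat.zero_le _) (hself (l.getD i gd)))
      · refine le_trans (howner _ hU2) ?_
        refine Finset.single_le_sum (f := fun g => v (owner (l.getD (i+h) gd)) g)
          (fun _ _ => Nat.zero_le _) ?_
        rw [← hfw]
        exact hfmem (l.getD i gd)
  -- the part map is injective on W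
  have hinj : Set.InjOn (fun w => P.part w) W := by
    intro w hw w' hw' hww
    simp only [Finset.mem_coe] at hw hw'
    have hw'in : w' ∈ P.part w := by
      simp only at hww
      rw [hww]; exact hself w'
    have hrel : st.r w w' := Finpartition.mem_part_ofSetoid_iff_rel.mp hw'in
    rcases hrel with h1 | h1
    · exact h1.symm
    · rw [hW, Finset.mem_union] at hw hw'
      rcases hw with hw | hw
      · have hwl : w ∉ l := fun hc => hMU w hw ((hlmem w).mp hc)
        rw [hf_not w hwl] at h1
        exact h1.symm
      · exfalso
        obtain ⟨i, hi, rfl⟩ := himL_mem w hw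
        have hfw : f (l.getD i gd) = l.getD (i+h) gd := by
          rw [hf_mem i (by omega), pairIdx_small hi]
        rw [hfw] at h1
        have hU2 : l.getD (i+h) gd ∈ U := hgetU (i+h) (by omega)
        rcases hw' with hw' | hw'
        · rw [h1] at hw'
          exact hMU _ hw' hU2
        · obtain ⟨i', hi', hwi'⟩ := himL_mem w' hw'
          rw [h1] at hwi'
          have := hgetInj (i+h) i' (by omega) (by omega) hwi'
          omega
  -- counting: |W| many parts have second price at least 1
  have hcount : M.card + k ≤ ∑ Gb ∈ P.parts, V2 v (univ : Finset B) Gb := by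
    have hmaps : ∀ w ∈ W, P.part w ∈ P.parts.filter (fun Gb => 1 ≤ V2 v (univ : Finset B) Gb) :=
      fun w hw => Finset.mem_filter.mpr ⟨P.part_mem.mpr (mem_univ w), hV2part w hw⟩
    have h2 : W.card ≤ (P.parts.filter (fun Gb => 1 ≤ V2 v (univ : Finset B) Gb)).card :=
      Finset.card_le_card_of_injOn (fun w => P.part w) hmaps hinj
    calc M.card + k = W.card := hWcard.symm
      _ ≤ (P.parts.filter (fun Gb => 1 ≤ V2 v (univ : Finset B) Gb)).card := h2
      _ = ∑ Gb ∈ P.parts.filter (fun Gb => 1 ≤ V2 v (univ : Finset B) Gb), 1 := by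
          rw [Finset.card_eq_sum_ones]
      _ ≤ ∑ Gb ∈ P.parts.filter (fun Gb => 1 ≤ V2 v (univ : Finset B) Gb),
            V2 v (univ : Finset B) Gb :=
          Finset.sum_le_sum (fun Gb hGb => (Finset.mem_filter.mp hGb).2)
      _ ≤ ∑ Gb ∈ P.parts, V2 v (univ : Finset B) Gb :=
          Finset.sum_le_sum_of_subset (Finset.filter_subset _ _)
  -- the number of demanded goods is at most |M| + t
  have hp1 : pdem v 1 ≤ M.card + t := by
    unfold pdem
    have hsub : univ.filter (fun g : G => 1 ≤ ∑ b, v b g) ⊆ M ∪ U := by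
      intro g hg
      rw [mem_filter] at hg
      rw [Finset.mem_union, hMmem, hUmem]
      omega
    calc (univ.filter (fun g : G => 1 ≤ ∑ b, v b g)).card
        ≤ (M ∪ U).card := Finset.card_le_card hsub
      _ ≤ M.card + U.card := Finset.card_union_le _ _
      _ = M.card + t := by rw [ht]
  exact ⟨P, bstar, by omega⟩

/-- every revenue-maximizing partition attains at least a third
of the optimal social welfare. -/
theorem revmax_sw_ge_third_opt [Nonempty B] [Nonempty G]
    (v : B → G → ℕ) (hv : ∀ b g, v b g ≤ 1)
    (π : Finpartition (univ : Finset G))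
    (hmax : ∀ π' : Finpartition (univ : Finset G), rev1 v π' ≤ rev1 v π)
    (π' : Finpartition (univ : Finset G)) :
    (1 / 3 : ℚ) * SW1 v π' ≤ SW1 v π := by
  classical
  obtain ⟨P, bst, hkey⟩ := key_lemma v hv
  have hGpos : (0:ℚ) < (Fintype.card G : ℚ) := by exact_mod_cast Fintype.card_pos
  -- revenue comparison, in ℕ
  have hrevN : (∑ Gb ∈ P.parts, V2 v (univ : Finset B) Gb)
      ≤ ∑ Gb ∈ π.parts, V2 v (univ : Finset B) Gb := by
    have h := hmax P
    unfold rev1 at h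
    rw [mul_le_mul_iff_right₀ (inv_pos.mpr hGpos)] at h
    exact_mod_cast h
  have hV2V1 : (∑ Gb ∈ π.parts, V2 v (univ : Finset B) Gb)
      ≤ ∑ Gb ∈ π.parts, V1 v (univ : Finset B) Gb :=
    Finset.sum_le_sum (fun Gb _ => V2_le_V1 v _ Gb)
  have hbT : vsum v bst univ ≤ ∑ Gb ∈ π.parts, V1 v (univ : Finset B) Gb := by
    have h1 : vsum v bst univ = ∑ Gb ∈ π.parts, vsum v bst Gb := by
      unfold vsum
      rw [sum_parts_nat π (v bst)]
    rw [h1]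
    exact Finset.sum_le_sum (fun Gb _ => vsum_le_V1 (mem_univ bst) Gb)
  -- optimal welfare bound
  have hopt : (∑ Gb ∈ π'.parts, V1 v (univ : Finset B) Gb) ≤ pdem v 1 := by
    have h1 : ∀ Gb : Finset G, V1 v (univ : Finset B) Gb
        ≤ ∑ g ∈ Gb, (if 1 ≤ ∑ b, v b g then 1 else 0) := by
      intro Gb
      apply Finset.sup_le
      intro b _
      apply Finset.sum_le_sum
      intro g _
      have hs : v b g ≤ ∑ b', v b' g :=
        Finset.single_le_sum (f := fun b' => v b' g) (fun _ _ => Nat.zero_le _) (mem_univ b)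
      split_ifs with hd
      · exact hv b g
      · omega
    calc (∑ Gb ∈ π'.parts, V1 v (univ : Finset B) Gb)
        ≤ ∑ Gb ∈ π'.parts, ∑ g ∈ Gb, (if 1 ≤ ∑ b, v b g then 1 else 0) :=
          Finset.sum_le_sum (fun Gb _ => h1 Gb)
      _ = ∑ g, (if 1 ≤ ∑ b, v b g then 1 else 0) := sum_parts_nat π' _
      _ = pdem v 1 := by
          unfold pdem
          rw [Finset.card_filter]
  -- combine, in ℕ
  have hfinal : (∑ Gb ∈ π'.parts, V1 v (univ : Finset B) Gb)
      ≤ 3 * ∑ Gb ∈ π.parts, V1 v (univ : Finset B) Gb := by omega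
  -- conclude in ℚ
  unfold SW1
  have hcast : (∑ Gb ∈ π'.parts, (V1 v (univ : Finset B) Gb : ℚ))
      ≤ 3 * ∑ Gb ∈ π.parts, (V1 v (univ : Finset B) Gb : ℚ) := by
    exact_mod_cast hfinal
  have hinv : (0:ℚ) ≤ (Fintype.card G : ℚ)⁻¹ := le_of_lt (inv_pos.mpr hGpos)
  have heq : (1 / 3 : ℚ) * ((Fintype.card G : ℚ)⁻¹ *
        ∑ Gb ∈ π'.parts, (V1 v (univ : Finset B) Gb : ℚ))
      = (Fintype.card G : ℚ)⁻¹ *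
        ((1 / 3) * ∑ Gb ∈ π'.parts, (V1 v (univ : Finset B) Gb : ℚ)) := by ring
  rw [heq]
  exact mul_le_mul_of_nonneg_left (by linarith) hinv
end

section
/- The one-third bound for a revenue-maximizing monopolist is tight: for B = G = {1,2,3} with v(b,g) = 1 if b = g and v(b,g) = 0 otherwise, the trivial partition {G} is revenue-maximizing, SW({G}) = 1/3, and max_{π'} SW(π') = 1. -/
open Finset

variable {B G S : Type*} [Fintype B] [Fintype G] [Fintype S]
variable [DecidableEq B] [DecidableEq G] [DecidableEq S]

/-- The identity-like valuation matrix on three buyers and three goods. -/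
def vDiag3 : Fin 3 → Fin 3 → ℕ := fun b g => if b = g then 1 else 0

lemma hV2diag : ∀ Gb : Finset (Fin 3),
    V2 vDiag3 (univ : Finset (Fin 3)) Gb = if 2 ≤ Gb.card then 1 else 0 := by decide

lemma hV1diag : ∀ Gb : Finset (Fin 3), V1 vDiag3 (univ : Finset (Fin 3)) Gb ≤ 1 := by decide

/-- tightness of the one-third bound. -/
theorem third_bound_tight :
    (∀ π' : Finpartition (univ : Finset (Fin 3)),
        rev1 vDiag3 π' ≤ rev1 vDiag3 (trivPart (Fin 3))) ∧
    SW1 vDiag3 (trivPart (Fin 3)) = 1 / 3 ∧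
    IsGreatest (Set.range (SW1 vDiag3)) 1 := by
  have htriv : (trivPart (Fin 3)).parts = {(univ : Finset (Fin 3))} := rfl
  refine ⟨?_, ?_, ?_⟩
  · intro π'
    have hsum : (∑ Gb ∈ π'.parts, V2 vDiag3 (univ : Finset (Fin 3)) Gb) ≤ 1 := by
      have hrw : ∀ Gb ∈ π'.parts,
          V2 vDiag3 (univ : Finset (Fin 3)) Gb = if 2 ≤ Gb.card then 1 else 0 :=
        fun Gb _ => hV2diag Gb
      rw [Finset.sum_congr rfl hrw, ← Finset.card_filter]
      refine Finset.card_le_one.2 (fun a ha b hb => ?_)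
      simp only [Finset.mem_filter] at ha hb
      by_contra hne
      have hsub : ({a, b} : Finset (Finset (Fin 3))) ⊆ π'.parts := by
        intro x hx
        simp only [Finset.mem_insert, Finset.mem_singleton] at hx
        rcases hx with rfl | rfl
        exacts [ha.1, hb.1]
      have h4 : 4 ≤ ∑ Gb ∈ ({a, b} : Finset (Finset (Fin 3))), Gb.card := by
        rw [Finset.sum_pair hne]
        omega
      have h3 : ∑ Gb ∈ π'.parts, Gb.card = 3 := by
        rw [π'.sum_card_parts]
        simp
      have h5 : ∑ Gb ∈ ({a, b} : Finset (Finset (Fin 3))), Gb.card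
          ≤ ∑ Gb ∈ π'.parts, Gb.card := Finset.sum_le_sum_of_subset hsub
      omega
    have h1 : V2 vDiag3 (univ : Finset (Fin 3)) (univ : Finset (Fin 3)) = 1 := by decide
    rw [rev1, rev1, htriv, Finset.sum_singleton, h1]
    have hnn : (0 : ℚ) ≤ (Fintype.card (Fin 3) : ℚ)⁻¹ := by norm_num
    refine mul_le_mul_of_nonneg_left ?_ hnn
    push_cast
    exact_mod_cast hsum
  · have h1 : V1 vDiag3 (univ : Finset (Fin 3)) (univ : Finset (Fin 3)) = 1 := by decide
    rw [SW1, htriv, Finset.sum_singleton, h1]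
    norm_num
  · constructor
    · refine ⟨⊥, ?_⟩
      rw [SW1, Finpartition.parts_bot, Finset.sum_map]
      have h1 : ∀ g : Fin 3, V1 vDiag3 (univ : Finset (Fin 3)) {g} = 1 := by decide
      simp only [Function.Embedding.coeFn_mk, h1]
      norm_num
    · rintro x ⟨π, rfl⟩
      have h : ∑ Gb ∈ π.parts, V1 vDiag3 (univ : Finset (Fin 3)) Gb ≤ π.parts.card := by
        calc ∑ Gb ∈ π.parts, V1 vDiag3 (univ : Finset (Fin 3)) Gb
            ≤ ∑ _Gb ∈ π.parts, 1 := Finset.sum_le_sum (fun Gb _ => hV1diag Gb)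
          _ = π.parts.card := by simp
      have hc : π.parts.card ≤ 3 := by simpa using π.card_parts_le_card
      rw [SW1]
      have : (∑ Gb ∈ π.parts, (V1 vDiag3 (univ : Finset (Fin 3)) Gb : ℚ)) ≤ 3 := by
        exact_mod_cast h.trans hc
      calc (Fintype.card (Fin 3) : ℚ)⁻¹ * ∑ Gb ∈ π.parts, (V1 vDiag3 (univ : Finset (Fin 3)) Gb : ℚ)
          ≤ (Fintype.card (Fin 3) : ℚ)⁻¹ * 3 := by
            refine mul_le_mul_of_nonneg_left this (by norm_num)
        _ = 1 := by norm_num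
end

section
/- The one-half bound is tight: for B = G = {1,2} with v(b,g) = 1 if b = g and v(b,g) = 0 otherwise, every revenue-maximizing partition π satisfies SW(π) = 1/2, while max_{π'} SW(π') = 1. -/
open Finset

variable {B G S : Type*} [Fintype B] [Fintype G] [Fintype S]
variable [DecidableEq B] [DecidableEq G] [DecidableEq S]

/-- The identity-like valuation matrix on two buyers and two goods. -/
def vDiag2 : Fin 2 → Fin 2 → ℕ := fun b g => if b = g then 1 else 0


lemma parts_classify (π : Finpartition (univ : Finset (Fin 2))) :
    π.parts = {Finset.univ} ∨ π.parts = {{0}, {1}} := by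
  have hclass : ∀ p ∈ π.parts, p = {0} ∨ p = {1} ∨ p = Finset.univ := by
    intro p hp
    exact (by decide : ∀ p : Finset (Fin 2), p.Nonempty →
      p = {0} ∨ p = {1} ∨ p = Finset.univ) p (π.nonempty_of_mem_parts hp)
  by_cases huniv : (Finset.univ : Finset (Fin 2)) ∈ π.parts
  · left
    refine Finset.eq_singleton_iff_unique_mem.mpr ⟨huniv, fun q hq => ?_⟩
    obtain ⟨a, ha⟩ := π.nonempty_of_mem_parts hq
    exact π.eq_of_mem_parts hq huniv ha (mem_univ a)
  · right
    obtain ⟨p0, hp0, h0⟩ := π.exists_mem (mem_univ (0 : Fin 2))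
    obtain ⟨p1, hp1, h1⟩ := π.exists_mem (mem_univ (1 : Fin 2))
    have e0 : p0 = {0} := by
      rcases hclass p0 hp0 with h | h | h
      · exact h
      · subst h; simp at h0
      · exact absurd (h ▸ hp0) huniv
    have e1 : p1 = {1} := by
      rcases hclass p1 hp1 with h | h | h
      · subst h; simp at h1
      · exact h
      · exact absurd (h ▸ hp1) huniv
    apply Finset.Subset.antisymm
    · intro q hq
      rcases hclass q hq with h | h | h
      · simp [h]
      · simp [h]
      · exact absurd (h ▸ hq) huniv
    · intro q hq
      simp only [Finset.mem_insert, Finset.mem_singleton] at hq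
      rcases hq with h | h
      · exact h ▸ e0 ▸ hp0
      · exact h ▸ e1 ▸ hp1

lemma SW1_of_indiscrete (π : Finpartition (univ : Finset (Fin 2)))
    (h : π.parts = {Finset.univ}) : SW1 vDiag2 π = 1 / 2 := by
  rw [SW1, h, Finset.sum_singleton,
    (by decide : V1 vDiag2 (Finset.univ : Finset (Fin 2)) Finset.univ = 1)]
  norm_num

lemma rev1_of_indiscrete (π : Finpartition (univ : Finset (Fin 2)))
    (h : π.parts = {Finset.univ}) : rev1 vDiag2 π = 1 / 2 := by
  rw [rev1, h, Finset.sum_singleton,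
    (by decide : V2 vDiag2 (Finset.univ : Finset (Fin 2)) Finset.univ = 1)]
  norm_num

lemma SW1_of_discrete (π : Finpartition (univ : Finset (Fin 2)))
    (h : π.parts = {{0}, {1}}) : SW1 vDiag2 π = 1 := by
  rw [SW1, h, Finset.sum_pair (by decide : ({0} : Finset (Fin 2)) ≠ {1}),
    (by decide : V1 vDiag2 (Finset.univ : Finset (Fin 2)) {0} = 1),
    (by decide : V1 vDiag2 (Finset.univ : Finset (Fin 2)) {1} = 1)]
  norm_num

lemma rev1_of_discrete (π : Finpartition (univ : Finset (Fin 2)))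
    (h : π.parts = {{0}, {1}}) : rev1 vDiag2 π = 0 := by
  rw [rev1, h, Finset.sum_pair (by decide : ({0} : Finset (Fin 2)) ≠ {1}),
    (by decide : V2 vDiag2 (Finset.univ : Finset (Fin 2)) {0} = 0),
    (by decide : V2 vDiag2 (Finset.univ : Finset (Fin 2)) {1} = 0)]
  norm_num

/-- tightness of the one-half bound. -/
theorem half_bound_tight :
    (∀ π : Finpartition (univ : Finset (Fin 2)),
        (∀ π' : Finpartition (univ : Finset (Fin 2)), rev1 vDiag2 π' ≤ rev1 vDiag2 π) →
        SW1 vDiag2 π = 1 / 2) ∧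
    IsGreatest (Set.range (SW1 vDiag2)) 1 := by
  constructor
  · intro π hmax
    rcases parts_classify π with h | h
    · exact SW1_of_indiscrete π h
    · exfalso
      have h1 := hmax (trivPart (Fin 2))
      rw [rev1_of_discrete π h,
        rev1_of_indiscrete _ (by rw [trivPart, Finpartition.indiscrete_parts])] at h1
      norm_num at h1
  · constructor
    · refine ⟨⊥, ?_⟩
      apply SW1_of_discrete
      rw [Finpartition.parts_bot]
      decide
    · rintro x ⟨π, rfl⟩
      rcases parts_classify π with h | h
      · rw [SW1_of_indiscrete π h]; norm_num
      · rw [SW1_of_discrete π h]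
end

section
/- In the monopoly setting, if the trivial partition {G} is revenue-maximizing and moreover SW({G}) ≥ SW(π) for every revenue-maximizing partition π, then p^1 + p^2 ≤ 2·V̄1(B,G). -/
open Finset

variable {B G S : Type*} [Fintype B] [Fintype G] [Fintype S]
variable [DecidableEq B] [DecidableEq G] [DecidableEq S]

section AuxLemmas

set_option linter.unusedSectionVars false

lemma vsum_empty' (v : B → G → ℕ) (b : B) : vsum v b ∅ = 0 := by simp [vsum]

lemma V1_empty' (v : B → G → ℕ) (Bb : Finset B) : V1 v Bb ∅ = 0 := by
  simp [V1, vsum_empty']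

lemma V2_empty' (v : B → G → ℕ) (Bb : Finset B) : V2 v Bb ∅ = 0 := by
  unfold V2
  split
  · simp [V1_empty']
  · rfl

lemma le_V1' (v : B → G → ℕ) {Bb : Finset B} {b : B} (hb : b ∈ Bb) (Gb : Finset G) :
    vsum v b Gb ≤ V1 v Bb Gb := Finset.le_sup (f := fun b => vsum v b Gb) hb

lemma vsum_le_card' (v : B → G → ℕ) (hv : ∀ b g, v b g ≤ 1) (b : B) (Gb : Finset G) :
    vsum v b Gb ≤ Gb.card := by
  classical
  calc vsum v b Gb ≤ ∑ _g ∈ Gb, 1 := Finset.sum_le_sum (fun g _ => hv b g)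
  _ = Gb.card := by simp

lemma min_le_V2' [Nonempty B] (v : B → G → ℕ) {b b' : B} (hne : b ≠ b') (Gb : Finset G) :
    min (vsum v b Gb) (vsum v b' Gb) ≤ V2 v (univ : Finset B) Gb := by
  rw [V2, dif_pos univ_nonempty]
  refine Finset.le_inf' _ _ (fun c _ => ?_)
  by_cases hc : c = b
  · subst hc
    exact le_trans (min_le_right _ _) (le_V1' v (mem_erase.mpr ⟨hne.symm, mem_univ _⟩) Gb)
  · exact le_trans (min_le_left _ _) (le_V1' v (mem_erase.mpr ⟨Ne.symm hc, mem_univ _⟩) Gb)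

lemma V1_singleton_eq_one' [Nonempty B] (v : B → G → ℕ) (hv : ∀ b g, v b g ≤ 1) {g : G}
    (hg : 1 ≤ ∑ b : B, v b g) : V1 v (univ : Finset B) {g} = 1 := by
  apply le_antisymm
  · exact Finset.sup_le (fun b _ => by simpa [vsum] using hv b g)
  · obtain ⟨b, _, hb⟩ : ∃ b ∈ (univ : Finset B), v b g ≠ 0 := by
      by_contra h
      push_neg at h
      simp only [Finset.sum_eq_zero (fun b hb => h b hb)] at hg
      omega
    calc 1 ≤ v b g := by omega
    _ = vsum v b {g} := by simp [vsum]
    _ ≤ _ := le_V1' v (mem_univ b) {g}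

lemma V2_singleton_eq_one' [Nonempty B] (v : B → G → ℕ) (hv : ∀ b g, v b g ≤ 1) {g : G}
    (hg : 2 ≤ ∑ b : B, v b g) : V2 v (univ : Finset B) {g} = 1 := by
  rw [V2, dif_pos univ_nonempty]
  apply le_antisymm
  · obtain ⟨c⟩ := ‹Nonempty B›
    refine le_trans (Finset.inf'_le _ (mem_univ c)) ?_
    exact Finset.sup_le (fun b _ => by simpa [vsum] using hv b g)
  · refine Finset.le_inf' _ _ (fun c _ => ?_)
    have hsum : ∑ b ∈ (univ : Finset B).erase c, v b g + v c g = ∑ b : B, v b g :=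
      Finset.sum_erase_add _ _ (mem_univ c)
    have hc1 : v c g ≤ 1 := hv c g
    obtain ⟨b, hb, hbg⟩ : ∃ b ∈ (univ : Finset B).erase c, v b g ≠ 0 := by
      by_contra h
      push_neg at h
      rw [Finset.sum_eq_zero (fun b hb => h b hb)] at hsum
      omega
    calc 1 ≤ v b g := by omega
    _ = vsum v b {g} := by simp [vsum]
    _ ≤ _ := le_V1' v hb {g}

set_option linter.unnecessarySimpa false in
lemma exists_split_partition' (S2 Q R : Finset G) (hQR : Disjoint Q R)
    (hQ2 : Disjoint Q S2) (hR2 : Disjoint R S2)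
    (hcover : S2 ∪ (Q ∪ R) = univ) :
    ∃ π : Finpartition (univ : Finset G), ∀ (f : Finset G → ℕ), f ∅ = 0 →
      ∑ t ∈ π.parts, f t = (∑ g ∈ S2, f {g}) + (f Q + f R) := by
  classical
  set parts0 : Finset (Finset G) := S2.image (fun g => ({g} : Finset G)) ∪ {Q, R} with hparts0
  have hsingQ : ∀ x ∈ S2.image (fun g => ({g} : Finset G)), x ∉ ({Q, R} : Finset (Finset G)) := by
    intro x hx hx'
    obtain ⟨g, hg, rfl⟩ := mem_image.mp hx
    rcases mem_insert.mp hx' with h | h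
    · exact (disjoint_left.mp hQ2) (h ▸ mem_singleton_self g) hg
    · exact (disjoint_left.mp hR2) ((mem_singleton.mp h) ▸ mem_singleton_self g) hg
  have hdisj : Disjoint (S2.image (fun g => ({g} : Finset G))) ({Q, R} : Finset (Finset G)) :=
    disjoint_left.mpr hsingQ
  have hsup : parts0.sup id = univ := by
    rw [hparts0, sup_union]
    have h1 : (S2.image (fun g => ({g} : Finset G))).sup id = S2 := by
      rw [sup_image]
      simpa using Finset.sup_singleton'' S2 id
    have h2 : ({Q, R} : Finset (Finset G)).sup id = Q ∪ R := by
      simp [sup_insert, sup_singleton, Finset.sup_eq_union]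
    rw [h1, h2, Finset.sup_eq_union, hcover]
  have hindep : parts0.SupIndep id := by
    rw [Finset.supIndep_iff_pairwiseDisjoint]
    intro x hx y hy hxy
    simp only [Function.onFun, id_eq]
    simp only [hparts0, coe_union, Set.mem_union, mem_coe, mem_image, mem_insert,
      mem_singleton] at hx hy
    rcases hx with ⟨g, hg, rfl⟩ | hx
    · rcases hy with ⟨g', hg', rfl⟩ | hy
      · have hgg : g ≠ g' := fun h => hxy (by rw [h])
        simpa [Finset.disjoint_singleton_left] using hgg
      · rcases hy with rfl | rfl
        · simpa [Finset.disjoint_singleton_left] using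
            fun hgQ => disjoint_left.mp hQ2 hgQ hg
        · simpa [Finset.disjoint_singleton_left] using
            fun hgR => disjoint_left.mp hR2 hgR hg
    · rcases hy with ⟨g', hg', rfl⟩ | hy
      · rcases hx with rfl | rfl
        · simpa [Finset.disjoint_singleton_right] using
            fun hgQ => disjoint_left.mp hQ2 hgQ hg'
        · simpa [Finset.disjoint_singleton_right] using
            fun hgR => disjoint_left.mp hR2 hgR hg'
      · rcases hx with rfl | rfl <;> rcases hy with rfl | rfl
        · exact absurd rfl hxy
        · exact hQR
        · exact hQR.symm
        · exact absurd rfl hxy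
  refine ⟨Finpartition.ofErase parts0 hindep hsup, ?_⟩
  intro f hf
  have hp : (Finpartition.ofErase parts0 hindep hsup).parts = parts0.erase ∅ := rfl
  rw [hp, Finset.sum_erase _ hf, hparts0, Finset.sum_union hdisj]
  congr 1
  · rw [Finset.sum_image]
    intro g hg g' hg' h
    simpa using h
  · by_cases hqr : Q = R
    · have hR0 : R = ∅ := by
        have h := hQR
        rw [hqr] at h
        simpa using disjoint_self.mp h
      simp [hqr, hR0, hf]
    · rw [Finset.sum_pair hqr]

end AuxLemmas

/-- if the trivial partition is revenue-maximizing and welfare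
maximal among revenue-maximizing partitions, then `p¹ + p² ≤ 2·V̄1(B,G)`. -/
theorem trivial_revmax_best_p1_p2_le [Nonempty B] [Nonempty G]
    (v : B → G → ℕ) (hv : ∀ b g, v b g ≤ 1)
    (htriv : ∀ π' : Finpartition (univ : Finset G), rev1 v π' ≤ rev1 v (trivPart G))
    (hbest : ∀ π : Finpartition (univ : Finset G),
        (∀ π' : Finpartition (univ : Finset G), rev1 v π' ≤ rev1 v π) →
        SW1 v π ≤ SW1 v (trivPart G)) :
    pdem v 1 + pdem v 2 ≤ 2 * V1 v (univ : Finset B) (univ : Finset G) := by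
  classical
  have hcardG : (0:ℚ) < (Fintype.card G : ℚ) := by exact_mod_cast Fintype.card_pos
  have hinv : (0:ℚ) < (Fintype.card G : ℚ)⁻¹ := inv_pos.mpr hcardG
  -- ℕ versions of the hypotheses
  have htrivN : ∀ π : Finpartition (univ : Finset G),
      (∑ t ∈ π.parts, V2 v (univ : Finset B) t) ≤ V2 v (univ : Finset B) (univ : Finset G) := by
    intro π
    have h := htriv π
    rw [rev1, rev1] at h
    simp only [trivPart, Finpartition.indiscrete_parts, Finset.sum_singleton] at h
    exact_mod_cast (mul_le_mul_iff_right₀ hinv).mp h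
  have hrevmaxSW : ∀ π : Finpartition (univ : Finset G),
      V2 v (univ : Finset B) (univ : Finset G) ≤ (∑ t ∈ π.parts, V2 v (univ : Finset B) t) →
      (∑ t ∈ π.parts, V1 v (univ : Finset B) t) ≤ V1 v (univ : Finset B) (univ : Finset G) := by
    intro π hge
    have hπmax : ∀ π', rev1 v π' ≤ rev1 v π := by
      intro π'
      refine (htriv π').trans ?_
      rw [rev1, rev1]
      simp only [trivPart, Finpartition.indiscrete_parts, Finset.sum_singleton]
      refine mul_le_mul_of_nonneg_left ?_ (le_of_lt hinv)
      exact_mod_cast hge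
    have h := hbest π hπmax
    rw [SW1, SW1] at h
    simp only [trivPart, Finpartition.indiscrete_parts, Finset.sum_singleton] at h
    exact_mod_cast (mul_le_mul_iff_right₀ hinv).mp h
  -- the set of multi-demanded goods and its complement
  set S2 : Finset G := univ.filter (fun g : G => 2 ≤ ∑ b : B, v b g) with hS2def
  set P : Finset G := univ \ S2 with hPdef
  have hp2 : pdem v 2 = S2.card := by rw [pdem, hS2def]
  have hP1 : ∀ g ∈ P, (∑ b : B, v b g) ≤ 1 := by
    intro g hg
    have := (mem_sdiff.mp hg).2
    rw [hS2def] at this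
    simp only [mem_filter, mem_univ, true_and] at this
    omega
  have hS2dem : ∀ g ∈ S2, 2 ≤ ∑ b : B, v b g := by
    intro g hg
    rw [hS2def] at hg
    exact (mem_filter.mp hg).2
  have hsd : ∀ (b : B) (X Y : Finset G), X ⊆ Y →
      vsum v b Y = vsum v b X + vsum v b (Y \ X) := by
    intro b X Y hXY
    have h := Finset.sum_sdiff (f := v b) hXY
    unfold vsum
    omega
  have hP : ∀ b : B, vsum v b (univ : Finset G) = vsum v b S2 + vsum v b P := by
    intro b
    rw [hPdef]
    exact hsd b S2 univ (subset_univ _)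
  -- top buyer
  obtain ⟨b1, -, hb1⟩ := Finset.exists_mem_eq_sup (univ : Finset B) univ_nonempty
    (fun b => vsum v b (univ : Finset G))
  have hVm : V1 v (univ : Finset B) (univ : Finset G) = vsum v b1 (univ : Finset G) := hb1
  have hmax : ∀ b : B, vsum v b (univ : Finset G) ≤ vsum v b1 (univ : Finset G) :=
    fun b => hVm ▸ le_V1' v (mem_univ b) _
  by_cases hone : ((univ : Finset B).erase b1).Nonempty
  · -- at least two buyers
    obtain ⟨b2, hb2mem, hb2⟩ := Finset.exists_mem_eq_sup _ hone
      (fun b => vsum v b (univ : Finset G))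
    have hb2ne : b2 ≠ b1 := (mem_erase.mp hb2mem).1
    have hW2le : V2 v (univ : Finset B) (univ : Finset G) ≤ vsum v b2 (univ : Finset G) := by
      rw [V2, dif_pos univ_nonempty]
      exact le_trans (Finset.inf'_le _ (mem_univ b1)) (le_of_eq hb2)
    -- key step: the split partition is revenue-maximizing, hence welfare-bounded
    have hkey : ∀ Q : Finset G, Q ⊆ P → vsum v b1 Q = 0 → vsum v b2 Q = 0 →
        S2.card + (V1 v (univ : Finset B) Q + V1 v (univ : Finset B) (P \ Q))
          ≤ V1 v (univ : Finset B) (univ : Finset G) := by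
      intro Q hQP hQ1 hQ2v
      have hQS2 : Disjoint Q S2 := by
        refine disjoint_left.mpr (fun g hg hg2 => ?_)
        exact (mem_sdiff.mp (hQP hg)).2 hg2
      have hRS2 : Disjoint (P \ Q) S2 := by
        refine disjoint_left.mpr (fun g hg hg2 => ?_)
        exact (mem_sdiff.mp (mem_sdiff.mp hg).1).2 hg2
      have hcover : S2 ∪ (Q ∪ (P \ Q)) = univ := by
        rw [Finset.union_sdiff_of_subset hQP, hPdef, Finset.union_sdiff_of_subset (subset_univ _)]
      obtain ⟨π, hπ⟩ := exists_split_partition' S2 Q (P \ Q) Finset.disjoint_sdiff hQS2 hRS2 hcover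
      have hV2sum := hπ (V2 v (univ : Finset B)) (V2_empty' v _)
      have hV1sum := hπ (V1 v (univ : Finset B)) (V1_empty' v _)
      have hS2V2 : ∑ g ∈ S2, V2 v (univ : Finset B) {g} = S2.card := by
        rw [Finset.sum_congr rfl (fun g hg => V2_singleton_eq_one' v hv (hS2dem g hg))]
        simp
      have hS2V1 : ∑ g ∈ S2, V1 v (univ : Finset B) {g} = S2.card := by
        rw [Finset.sum_congr rfl (fun g hg => V1_singleton_eq_one' v hv (by have := hS2dem g hg; omega))]
        simp
      have hrm : V2 v (univ : Finset B) (univ : Finset G) ≤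
          ∑ t ∈ π.parts, V2 v (univ : Finset B) t := by
        rw [hV2sum, hS2V2]
        have hs1 := hP b1
        have hs2 := hP b2
        have hs1' : vsum v b1 P = vsum v b1 Q + vsum v b1 (P \ Q) := hsd b1 Q P hQP
        have hs2' : vsum v b2 P = vsum v b2 Q + vsum v b2 (P \ Q) := hsd b2 Q P hQP
        have hc1 : vsum v b1 S2 ≤ S2.card := vsum_le_card' v hv b1 S2
        have hc2 : vsum v b2 S2 ≤ S2.card := vsum_le_card' v hv b2 S2
        have hminle := min_le_V2' v (Ne.symm hb2ne) (P \ Q)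
        have hm2 := hmax b2
        rcases le_total (vsum v b1 (P \ Q)) (vsum v b2 (P \ Q)) with hmm | hmm
        · rw [min_eq_left hmm] at hminle
          omega
        · rw [min_eq_right hmm] at hminle
          omega
      have hsw := hrevmaxSW π hrm
      rw [hV1sum, hS2V1] at hsw
      exact hsw
    -- application 1: Q = ∅
    have hA : S2.card + V1 v (univ : Finset B) P ≤ V1 v (univ : Finset B) (univ : Finset G) := by
      have h := hkey ∅ (empty_subset P) (vsum_empty' v b1) (vsum_empty' v b2)
      simpa [V1_empty', Finset.sdiff_empty] using h
    have hAb : ∀ b : B, S2.card + vsum v b P ≤ V1 v (univ : Finset B) (univ : Finset G) := by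
      intro b
      have := le_V1' v (mem_univ b) P
      omega
    -- application 2: other buyers demand nothing in P
    have hTzero : ∀ b : B, b ≠ b1 → b ≠ b2 → vsum v b P = 0 := by
      intro b hbb1 hbb2
      set Q : Finset G := P.filter (fun g => 1 ≤ v b g) with hQdef
      have hQP : Q ⊆ P := filter_subset _ _
      have hother : ∀ c : B, c ≠ b → vsum v c Q = 0 := by
        intro c hc
        refine Finset.sum_eq_zero (fun g hg => ?_)
        have hgP : g ∈ P := hQP hg
        have hdem1 : (∑ b' : B, v b' g) ≤ 1 := hP1 g hgP
        have hbg : 1 ≤ v b g := by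
          rw [hQdef] at hg
          exact (mem_filter.mp hg).2
        have hpair : v b g + v c g ≤ ∑ b' : B, v b' g := by
          calc v b g + v c g = ∑ b' ∈ ({b, c} : Finset B), v b' g :=
            (Finset.sum_pair (f := fun b' => v b' g) (Ne.symm hc)).symm
          _ ≤ _ := Finset.sum_le_sum_of_subset (subset_univ _)
        omega
      have hk := hkey Q hQP (hother b1 (Ne.symm hbb1)) (hother b2 (Ne.symm hbb2))
      have hbQ0 : vsum v b (P \ Q) = 0 := by
        refine Finset.sum_eq_zero (fun g hg => ?_)
        have h1 := (mem_sdiff.mp hg).1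
        have h2 := (mem_sdiff.mp hg).2
        rw [hQdef] at h2
        simp only [mem_filter, h1, true_and, not_le] at h2
        omega
      have hsb : vsum v b P = vsum v b Q + vsum v b (P \ Q) := hsd b Q P hQP
      have hsb1 : vsum v b1 P = vsum v b1 Q + vsum v b1 (P \ Q) := hsd b1 Q P hQP
      have hlQ : vsum v b Q ≤ V1 v (univ : Finset B) Q := le_V1' v (mem_univ b) Q
      have hlR : vsum v b1 (P \ Q) ≤ V1 v (univ : Finset B) (P \ Q) := le_V1' v (mem_univ b1) _
      have hs1 := hP b1
      have hc1 : vsum v b1 S2 ≤ S2.card := vsum_le_card' v hv b1 S2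
      have hb1Q : vsum v b1 Q = 0 := hother b1 (Ne.symm hbb1)
      rw [hVm] at hk
      omega
    -- counting: p1 = p2 + ∑_b t_b
    set S1 : Finset G := univ.filter (fun g : G => 1 ≤ ∑ b : B, v b g) with hS1def
    have hp1 : pdem v 1 = S1.card := by rw [pdem, hS1def]
    have hS2S1 : S2 ⊆ S1 := by
      intro g hg
      rw [hS1def]
      simp only [mem_filter, mem_univ, true_and]
      have := hS2dem g hg
      omega
    have hcard : (S1 \ S2).card + S2.card = S1.card := Finset.card_sdiff_add_card_eq_card hS2S1
    have hsub : S1 \ S2 ⊆ P := by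
      intro g hg
      rw [hPdef]
      exact mem_sdiff.mpr ⟨mem_univ g, (mem_sdiff.mp hg).2⟩
    have h1 : (S1 \ S2).card = ∑ g ∈ S1 \ S2, ∑ b : B, v b g := by
      rw [Finset.card_eq_sum_ones]
      refine Finset.sum_congr rfl (fun g hg => ?_)
      have hg1 : g ∈ S1 := (mem_sdiff.mp hg).1
      rw [hS1def] at hg1
      have hge := (mem_filter.mp hg1).2
      have hle := hP1 g (hsub hg)
      omega
    have h2 : ∑ g ∈ S1 \ S2, ∑ b : B, v b g = ∑ g ∈ P, ∑ b : B, v b g := by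
      refine Finset.sum_subset hsub (fun g hgP hgn => ?_)
      by_contra h
      have hg1 : g ∈ S1 := by
        rw [hS1def]
        simp only [mem_filter, mem_univ, true_and]
        omega
      exact hgn (mem_sdiff.mpr ⟨hg1, (mem_sdiff.mp hgP).2⟩)
    have h3 : ∑ g ∈ P, ∑ b : B, v b g = ∑ b : B, vsum v b P := by
      rw [Finset.sum_comm]
      rfl
    have h4 : ∑ b : B, vsum v b P = vsum v b1 P + vsum v b2 P := by
      have hpair : ∑ b ∈ ({b1, b2} : Finset B), vsum v b P = vsum v b1 P + vsum v b2 P :=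
        Finset.sum_pair (f := fun b => vsum v b P) (Ne.symm hb2ne)
      rw [← hpair]
      refine (Finset.sum_subset (subset_univ _) (fun b _ hb => ?_)).symm
      simp only [mem_insert, mem_singleton] at hb
      push_neg at hb
      exact hTzero b hb.1 hb.2
    have hA1 := hAb b1
    have hA2 := hAb b2
    rw [hp1, hp2]
    omega
  · -- single buyer
    have huniv : (univ : Finset B) = {b1} := by
      rw [Finset.not_nonempty_iff_eq_empty] at hone
      ext b
      simp only [mem_univ, mem_singleton, true_iff]
      by_contra hb
      have hmem : b ∈ (univ : Finset B).erase b1 := mem_erase.mpr ⟨hb, mem_univ b⟩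
      rw [hone] at hmem
      exact absurd hmem (notMem_empty b)
    have hdem : ∀ g : G, (∑ b : B, v b g) = v b1 g := by
      intro g
      calc ∑ b : B, v b g = ∑ b ∈ ({b1} : Finset B), v b g := by rw [huniv]
      _ = v b1 g := Finset.sum_singleton _ _
    have hp2z : pdem v 2 = 0 := by
      rw [pdem, Finset.card_eq_zero, Finset.filter_eq_empty_iff]
      intro g _
      have := hv b1 g
      rw [hdem g]
      omega
    have hp1le : pdem v 1 ≤ vsum v b1 (univ : Finset G) := by
      rw [pdem]
      calc (univ.filter (fun g : G => 1 ≤ ∑ b : B, v b g)).card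
          = ∑ g ∈ univ.filter (fun g : G => 1 ≤ ∑ b : B, v b g), 1 :=
            Finset.card_eq_sum_ones _
      _ ≤ ∑ g ∈ univ.filter (fun g : G => 1 ≤ ∑ b : B, v b g), v b1 g := by
            refine Finset.sum_le_sum (fun g hg => ?_)
            have := (mem_filter.mp hg).2
            rw [hdem g] at this
            exact this
      _ ≤ ∑ g : G, v b1 g := Finset.sum_le_sum_of_subset (filter_subset _ _)
      _ = vsum v b1 (univ : Finset G) := rfl
    rw [hVm]
    omega
end
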